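/- (Theorem 3) Let λ ∈ (0,1), let Ω(k) be a sequence of real symmetric n×n matrices, let P(k) be a sequence of real symmetric positive definite n×n matrices satisfying P(k+1) = (1/λ)·(P(k) − P(k)Ω(k)N(k)⁻¹Ω(k)P(k)) where N(k) = λ·I + Ω(k)P(k)Ω(k), and let θ̃(k) ∈ ℝⁿ satisfy θ̃(k+1) = (I − P(k)Ω(k)N(k)⁻¹Ω(k))·θ̃(k). Suppose there exist k_e ∈ ℕ and constants α_R > 0, β_R > 0 such that α_R·I ≼ P(k)⁻¹ ≼ β_R·I for all k ≥ k_e. Then for all k ≥ k_e, ‖θ̃(k)‖² ≤ (β_R/α_R)·λ^{k−k_e}·‖θ̃(k_e)‖²; in particular the parameter error θ̃(k) converges to zero exponentially. -/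

import Mathlib

open Matrix

/-- (Theorem 3) Global exponential stability of the parameter error: under the stated
RLS recursions, if `α_R I ≼ P(k)⁻¹ ≼ β_R I` for all `k ≥ k_e`, then
`‖θ̃(k)‖² ≤ (β_R/α_R) λ^{k−k_e} ‖θ̃(k_e)‖²` for all `k ≥ k_e`; in particular the
parameter error converges to zero exponentially. -/
theorem parameter_error_exponential_stability {n : ℕ}
    (lam : ℝ) (hlam0 : 0 < lam) (hlam1 : lam < 1)
    (Ω P : ℕ → Matrix (Fin n) (Fin n) ℝ)
    (hΩ : ∀ k, (Ω k).IsHermitian) (hP : ∀ k, (P k).PosDef)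
    (N : ℕ → Matrix (Fin n) (Fin n) ℝ)
    (hN : ∀ k, N k = lam • (1 : Matrix (Fin n) (Fin n) ℝ) + Ω k * P k * Ω k)
    (hPrec : ∀ k, P (k + 1) = lam⁻¹ • (P k - P k * Ω k * (N k)⁻¹ * Ω k * P k))
    (θtil : ℕ → (Fin n → ℝ))
    (hθrec : ∀ k, θtil (k + 1)
      = ((1 : Matrix (Fin n) (Fin n) ℝ) - P k * Ω k * (N k)⁻¹ * Ω k) *ᵥ θtil k)
    (k_e : ℕ) (αR βR : ℝ) (hαR : 0 < αR) (hβR : 0 < βR)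
    (hlow : ∀ k ≥ k_e,
      Matrix.PosSemidef ((P k)⁻¹ - αR • (1 : Matrix (Fin n) (Fin n) ℝ)))
    (hup : ∀ k ≥ k_e,
      Matrix.PosSemidef (βR • (1 : Matrix (Fin n) (Fin n) ℝ) - (P k)⁻¹)) :
    ∀ k ≥ k_e, θtil k ⬝ᵥ θtil k
      ≤ (βR / αR) * lam ^ (k - k_e) * (θtil k_e ⬝ᵥ θtil k_e) := by
  -- symmetry facts
  have hPs : ∀ k, (P k)ᵀ = P k := fun k => by
    have := (hP k).1
    rwa [Matrix.IsHermitian, Matrix.conjTranspose_eq_transpose_of_trivial] at this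
  have hOs : ∀ k, (Ω k)ᵀ = Ω k := fun k => by
    have := hΩ k
    rwa [Matrix.IsHermitian, Matrix.conjTranspose_eq_transpose_of_trivial] at this
  -- N k is positive definite, hence invertible
  have hNpd : ∀ k, (N k).PosDef := by
    intro k
    rw [hN]
    apply Matrix.PosDef.add_posSemidef
    · refine Matrix.PosDef.of_dotProduct_mulVec_pos (by simp [Matrix.IsHermitian]) fun x hx => ?_
      have : star x ⬝ᵥ (lam • (1 : Matrix (Fin n) (Fin n) ℝ)) *ᵥ x = lam * (x ⬝ᵥ x) := by
        simp [Matrix.smul_mulVec, dotProduct_smul]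
      rw [this]
      exact mul_pos hlam0 (by simpa using Matrix.dotProduct_star_self_pos_iff.mpr hx)
    · have := (hP k).posSemidef.mul_mul_conjTranspose_same (Ω k)
      rwa [(hΩ k).eq] at this
  have hNd : ∀ k, IsUnit (N k).det := fun k => (hNpd k).det_pos.ne'.isUnit
  have hPd : ∀ k, IsUnit (P k).det := fun k => (hP k).det_pos.ne'.isUnit
  -- the recursion for the inverse of P
  have hQ : ∀ k, (P (k + 1))⁻¹ = lam • (P k)⁻¹ + Ω k * Ω k := by
    intro k
    rw [hPrec k]
    apply Matrix.inv_eq_right_inv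
    set A := P k; set O := Ω k; set Nm := N k
    have hPQ : A * A⁻¹ = 1 := Matrix.mul_nonsing_inv _ (hPd k)
    have h1 : Nm⁻¹ * (lam • 1 + O * A * O) = 1 := by
      rw [← hN]; exact Matrix.nonsing_inv_mul _ (hNd k)
    have h2 : Nm⁻¹ * (O * (A * O)) = 1 - lam • Nm⁻¹ := by
      rw [mul_add, mul_smul_comm, mul_one] at h1
      rw [Matrix.mul_assoc O A O] at h1
      exact eq_sub_of_add_eq' h1
    have h3 : ∀ B : Matrix (Fin n) (Fin n) ℝ,
        Nm⁻¹ * (O * (A * (O * B))) = B - lam • (Nm⁻¹ * B) := by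
      intro B
      have := congrArg (· * B) h2
      simpa [Matrix.mul_assoc, Matrix.sub_mul, Matrix.smul_mul] using this
    simp only [Matrix.sub_mul, Matrix.mul_add, Matrix.add_mul, Matrix.smul_mul,
      Matrix.mul_smul, Matrix.mul_assoc, hPQ, Matrix.mul_one, h3, smul_sub, smul_smul,
      mul_sub, mul_smul_comm, inv_mul_cancel₀ hlam0.ne', mul_inv_cancel₀ hlam0.ne']
    module
  -- the key Lyapunov matrix identity
  have hkey : ∀ k, ((1 : Matrix (Fin n) (Fin n) ℝ) - P k * Ω k * (N k)⁻¹ * Ω k)ᵀ *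
        ((P (k + 1))⁻¹ * ((1 : Matrix (Fin n) (Fin n) ℝ) - P k * Ω k * (N k)⁻¹ * Ω k))
      = lam • (P k)⁻¹ - lam • (Ω k * (N k)⁻¹ * Ω k) := by
    intro k
    rw [hQ k]
    set A := P k; set O := Ω k; set Nm := N k
    have hQP : A⁻¹ * A = 1 := Matrix.nonsing_inv_mul _ (hPd k)
    have hPQ : A * A⁻¹ = 1 := Matrix.mul_nonsing_inv _ (hPd k)
    have h1 : (lam • 1 + O * A * O) * Nm⁻¹ = 1 := by
      rw [← hN]; exact Matrix.mul_nonsing_inv _ (hNd k)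
    have hNs : Nmᵀ = Nm := by
      rw [show Nm = lam • 1 + O * A * O from hN k]
      simp [Matrix.transpose_add, Matrix.transpose_smul, Matrix.transpose_mul,
        Matrix.mul_assoc, hPs, hOs, A, O]
    have hNis : (Nm⁻¹)ᵀ = Nm⁻¹ := by rw [Matrix.transpose_nonsing_inv, hNs]
    have h2 : O * (A * (O * Nm⁻¹)) = 1 - lam • Nm⁻¹ := by
      rw [add_mul, Matrix.smul_mul, one_mul] at h1
      rw [Matrix.mul_assoc, Matrix.mul_assoc] at h1
      exact eq_sub_of_add_eq' h1
    have h3 : ∀ B : Matrix (Fin n) (Fin n) ℝ,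
        O * (A * (O * (Nm⁻¹ * B))) = B - lam • (Nm⁻¹ * B) := by
      intro B
      have := congrArg (· * B) h2
      simpa [Matrix.mul_assoc, Matrix.sub_mul, Matrix.smul_mul] using this
    have h4 : ∀ B : Matrix (Fin n) (Fin n) ℝ, A⁻¹ * (A * B) = B := fun B => by
      rw [← Matrix.mul_assoc, hQP, Matrix.one_mul]
    have h5 : ∀ B : Matrix (Fin n) (Fin n) ℝ, A * (A⁻¹ * B) = B := fun B => by
      rw [← Matrix.mul_assoc, hPQ, Matrix.one_mul]
    have hFt : ((1 : Matrix (Fin n) (Fin n) ℝ) - A * O * Nm⁻¹ * O)ᵀ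
        = 1 - O * Nm⁻¹ * O * A := by
      simp [Matrix.transpose_sub, Matrix.transpose_mul, hPs, hOs, hNis, Matrix.mul_assoc, A, O]
    rw [hFt]
    simp only [Matrix.sub_mul, Matrix.mul_sub, Matrix.mul_add, Matrix.add_mul,
      Matrix.smul_mul, Matrix.mul_smul, Matrix.mul_assoc, hQP, hPQ, Matrix.mul_one,
      Matrix.one_mul, h3, h4, h5, smul_sub, smul_smul, mul_smul_comm,
      inv_mul_cancel₀ hlam0.ne', mul_inv_cancel₀ hlam0.ne']
    module
  -- the Lyapunov function
  set V : ℕ → ℝ := fun k => θtil k ⬝ᵥ (P k)⁻¹ *ᵥ θtil k with hV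
  have hswap : ∀ (M : Matrix (Fin n) (Fin n) ℝ) (a b : Fin n → ℝ),
      (M *ᵥ a) ⬝ᵥ b = a ⬝ᵥ Mᵀ *ᵥ b := fun M a b => by
    rw [Matrix.dotProduct_mulVec, Matrix.vecMul_transpose]
  have hVstep : ∀ k, V (k + 1) ≤ lam * V k := by
    intro k
    have hSpsd : (Ω k * (N k)⁻¹ * Ω k).PosSemidef := by
      have := ((hNpd k).inv).posSemidef.mul_mul_conjTranspose_same (Ω k)
      rwa [(hΩ k).eq] at this
    have hSnn : 0 ≤ θtil k ⬝ᵥ (Ω k * (N k)⁻¹ * Ω k) *ᵥ θtil k := by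
      simpa using hSpsd.dotProduct_mulVec_nonneg (θtil k)
    have hVeq : V (k + 1)
        = lam * V k - lam * (θtil k ⬝ᵥ (Ω k * (N k)⁻¹ * Ω k) *ᵥ θtil k) := by
      show θtil (k + 1) ⬝ᵥ (P (k + 1))⁻¹ *ᵥ θtil (k + 1) = _
      rw [hθrec k, hswap]
      simp only [Matrix.mulVec_mulVec]
      rw [hkey k]
      simp [Matrix.sub_mulVec, Matrix.smul_mulVec, dotProduct_sub,
        dotProduct_smul, smul_eq_mul, hV]
    rw [hVeq]
    nlinarith [hSnn, hlam0]
  -- geometric decay of V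
  have hVdecay : ∀ m, V (k_e + m) ≤ lam ^ m * V k_e := by
    intro m
    induction m with
    | zero => simp
    | succ m ih =>
      calc V (k_e + (m + 1)) = V ((k_e + m) + 1) := by ring_nf
        _ ≤ lam * V (k_e + m) := hVstep _
        _ ≤ lam * (lam ^ m * V k_e) := by
            exact mul_le_mul_of_nonneg_left ih hlam0.le
        _ = lam ^ (m + 1) * V k_e := by ring
  -- conclude
  intro k hk
  obtain ⟨m, rfl⟩ : ∃ m, k = k_e + m := ⟨k - k_e, (Nat.add_sub_cancel' hk).symm⟩
  have hml : k_e + m - k_e = m := Nat.add_sub_cancel_left k_e m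
  rw [hml]
  -- lower bound on V (k_e + m)
  have hlb : αR * (θtil (k_e + m) ⬝ᵥ θtil (k_e + m)) ≤ V (k_e + m) := by
    have := (hlow (k_e + m) (Nat.le_add_right _ _)).dotProduct_mulVec_nonneg (θtil (k_e + m))
    simp only [star_trivial, Matrix.sub_mulVec, Matrix.smul_mulVec,
      Matrix.one_mulVec, dotProduct_sub, dotProduct_smul, smul_eq_mul] at this
    simp only [hV]
    linarith
  -- upper bound on V k_e
  have hub : V k_e ≤ βR * (θtil k_e ⬝ᵥ θtil k_e) := by
    have := (hup k_e le_rfl).dotProduct_mulVec_nonneg (θtil k_e)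
    simp only [star_trivial, Matrix.sub_mulVec, Matrix.smul_mulVec,
      Matrix.one_mulVec, dotProduct_sub, dotProduct_smul, smul_eq_mul] at this
    simp only [hV]
    linarith
  have hpow : (0:ℝ) ≤ lam ^ m := pow_nonneg hlam0.le m
  have h6 : αR * (θtil (k_e + m) ⬝ᵥ θtil (k_e + m))
      ≤ βR * lam ^ m * (θtil k_e ⬝ᵥ θtil k_e) := by
    calc αR * (θtil (k_e + m) ⬝ᵥ θtil (k_e + m)) ≤ V (k_e + m) := hlb
      _ ≤ lam ^ m * V k_e := hVdecay m
      _ ≤ lam ^ m * (βR * (θtil k_e ⬝ᵥ θtil k_e)) :=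
          mul_le_mul_of_nonneg_left hub hpow
      _ = βR * lam ^ m * (θtil k_e ⬝ᵥ θtil k_e) := by ring
  have := (le_div_iff₀' hαR).mpr h6
  exact this.trans_eq (by ring)
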